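/- Let n ≥ 1 and 0 ≤ k ≤ n−1, and let (n−k, 1^k) denote the hook partition of n with arm n−k and k parts equal to 1. For every partition μ of n, the entry (Q(n)^{-1})_{μ,(n−k,1^k)} of the inverse quasi-Kostka matrix is 0 unless μ = (n−k, 1^k), in which case it equals 1. -/

import Mathlib

/-- A semistandard Young tableau (French notation) of shape given by the list `l` of row
lengths (row `0` is the bottom row).  Entries are positive integers; rows weakly increase
from left to right and columns strictly increase from bottom to top (entries outside the
shape are recorded as `0`). -/
structure SSYT (l : List ℕ) where
  entry : ℕ → ℕ → ℕ
  pos : ∀ i j, j < l.getD i 0 → 1 ≤ entry i j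
  zeros : ∀ i j, ¬ j < l.getD i 0 → entry i j = 0
  rowWeak : ∀ i j1 j2, j1 ≤ j2 → j2 < l.getD i 0 → entry i j1 ≤ entry i j2
  colStrict : ∀ i1 i2 j, i1 < i2 → j < l.getD i2 0 → entry i1 j < entry i2 j

/-- The cells of the Young diagram of `l`. -/
def cellsOf (l : List ℕ) : Finset (ℕ × ℕ) :=
  (Finset.range l.length).biUnion fun i =>
    (Finset.range (l.getD i 0)).image fun j => (i, j)

/-- The number of entries of `T` equal to `k`. -/
def wtOf {l : List ℕ} (T : SSYT l) (k : ℕ) : ℕ :=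
  ((cellsOf l).filter fun c => T.entry c.1 c.2 = k).card

/-- A tableau is quasi-Yamanouchi if whenever a value `k > 1` appears, some entry equal
to `k` lies in a strictly higher row than some entry equal to `k - 1`. -/
def IsQYT {l : List ℕ} (T : SSYT l) : Prop :=
  ∀ k, 2 ≤ k → (∃ c ∈ cellsOf l, T.entry c.1 c.2 = k) →
    ∃ c ∈ cellsOf l, ∃ c' ∈ cellsOf l,
      T.entry c.1 c.2 = k ∧ T.entry c'.1 c'.2 = k - 1 ∧ c'.1 < c.1

/-- `QK l α` : the number of quasi-Yamanouchi tableaux of shape `l` and weight `α`. -/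
noncomputable def QK (l α : List ℕ) : ℕ :=
  Set.ncard {T : SSYT l | IsQYT T ∧ ∀ i, wtOf T (i + 1) = α.getD i 0}

/-- `l` is (the list of parts of) a partition of `n`. -/
def IsPartitionOf (n : ℕ) (l : List ℕ) : Prop :=
  l.Pairwise (· ≥ ·) ∧ (∀ x ∈ l, 0 < x) ∧ l.sum = n

/-- `l` is (the list of parts of) a composition of `n`. -/
def IsCompositionOf (n : ℕ) (l : List ℕ) : Prop :=
  (∀ x ∈ l, 0 < x) ∧ l.sum = n

instance (n : ℕ) : DecidableEq (Composition n) := fun a b =>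
  decidable_of_iff (a.blocks = b.blocks) (by
    constructor
    · intro h; ext1; exact h
    · intro h; rw [h])

/-- The partitions of `n`, realized as compositions of `n` with weakly decreasing parts. -/
abbrev PartitionList (n : ℕ) := {c : Composition n // c.blocks.Pairwise (· ≥ ·)}

-- ### auxiliary lemmas

lemma lt_length_of_getD {l : List ℕ} {i j : ℕ} (h : j < l.getD i 0) : i < l.length := by
  by_contra hc
  rw [List.getD_eq_default l 0 (le_of_not_gt hc)] at h
  exact Nat.not_lt_zero j h

lemma mem_cellsOf {l : List ℕ} {c : ℕ × ℕ} : c ∈ cellsOf l ↔ c.2 < l.getD c.1 0 := by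
  obtain ⟨a, b⟩ := c
  simp only [cellsOf, Finset.mem_biUnion, Finset.mem_range, Finset.mem_image, Prod.mk.injEq]
  constructor
  · rintro ⟨i, _, j, hj, rfl, rfl⟩; exact hj
  · intro h; exact ⟨a, lt_length_of_getD h, b, h, rfl, rfl⟩

lemma getD_mono {l : List ℕ} (hs : l.Pairwise (· ≥ ·)) {i i' : ℕ} (h : i ≤ i') :
    l.getD i' 0 ≤ l.getD i 0 := by
  by_cases hi' : i' < l.length
  · have hi : i < l.length := lt_of_le_of_lt h hi'
    rw [List.getD_eq_getElem?_getD, List.getElem?_eq_getElem hi',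
      List.getD_eq_getElem?_getD, List.getElem?_eq_getElem hi]
    exact hs.rel_get_of_le h
  · rw [List.getD_eq_default l 0 (le_of_not_gt hi')]
    exact Nat.zero_le _

lemma entry_lower {l : List ℕ} (hs : l.Pairwise (· ≥ ·)) (T : SSYT l) :
    ∀ i j, j < l.getD i 0 → i + 1 ≤ T.entry i j := by
  intro i
  induction i with
  | zero => exact fun j h => T.pos 0 j h
  | succ i ih =>
    intro j h
    have h' : j < l.getD i 0 := lt_of_lt_of_le h (getD_mono hs (Nat.le_succ i))
    exact Nat.lt_of_le_of_lt (ih j h') (T.colStrict i (i+1) j (Nat.lt_succ_self i) h)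

/-- the set of cells in row `i` has cardinality `l.getD i 0` -/
lemma card_row (l : List ℕ) (i : ℕ) :
    ((cellsOf l).filter fun c => c.1 = i).card = l.getD i 0 := by
  have : ((cellsOf l).filter fun c => c.1 = i)
      = (Finset.range (l.getD i 0)).image fun j => (i, j) := by
    ext c
    obtain ⟨a, b⟩ := c
    simp only [Finset.mem_filter, mem_cellsOf, Finset.mem_image, Finset.mem_range,
      Prod.mk.injEq]
    constructor
    · rintro ⟨h1, rfl⟩; exact ⟨b, h1, rfl, rfl⟩
    · rintro ⟨j, hj, rfl, rfl⟩; exact ⟨hj, rfl⟩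
  rw [this, Finset.card_image_of_injective _ (fun a b hab => (Prod.mk.injEq _ _ _ _ ▸ hab).2),
    Finset.card_range]

lemma hookGetD (a k i : ℕ) :
    ((a :: List.replicate k 1).getD i 0) = if i = 0 then a else if i ≤ k then 1 else 0 := by
  cases i with
  | zero => simp
  | succ m =>
    simp only [List.getD_cons_succ]
    by_cases h : m < k
    · rw [List.getD_eq_getElem?_getD, List.getElem?_eq_getElem (by simpa using h)]
      simp [h, Nat.succ_le_of_lt h]
    · rw [List.getD_eq_default _ _ (by simpa using le_of_not_gt h),
        if_neg (by omega), if_neg (by omega)]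

lemma eq_of_getD : ∀ (l m : List ℕ), (∀ x ∈ l, 0 < x) → (∀ x ∈ m, 0 < x) →
    (∀ i, l.getD i 0 = m.getD i 0) → l = m
  | [], [], _, _, _ => rfl
  | [], y :: ys, _, hm, h => by
      have := hm y (by simp); have h0 := h 0; simp at h0; omega
  | x :: xs, [], hl, _, h => by
      have := hl x (by simp); have h0 := h 0; simp at h0; omega
  | x :: xs, y :: ys, hl, hm, h => by
      have h0 := h 0; simp only [List.getD_cons_zero] at h0
      have htail := eq_of_getD xs ys (fun a ha => hl a (by simp [ha]))
        (fun a ha => hm a (by simp [ha])) (fun i => by simpa using h (i + 1))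
      rw [h0, htail]

lemma SSYT.ext' {l : List ℕ} {T T' : SSYT l} (h : T.entry = T'.entry) : T = T' := by
  cases T; cases T'; simpa using h

section Analysis

variable {n a k : ℕ} {l : List ℕ} (hs : l.Pairwise (· ≥ ·)) (T : SSYT l)
  (hT : IsQYT T) (hw : ∀ i, wtOf T (i + 1) = ((a :: List.replicate k 1).getD i 0))

include hw in
lemma val_le : ∀ c ∈ cellsOf l, T.entry c.1 c.2 ≤ k + 1 := by
  intro c hc
  by_contra h
  push_neg at h
  set v := T.entry c.1 c.2 with hv
  have h1 : wtOf T ((v - 1) + 1) = ((a :: List.replicate k 1).getD (v - 1) 0) := hw (v - 1)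
  rw [hookGetD, if_neg (by omega), if_neg (by omega)] at h1
  have h2 : c ∈ (cellsOf l).filter fun c => T.entry c.1 c.2 = (v - 1) + 1 :=
    Finset.mem_filter.2 ⟨hc, by omega⟩
  have := Finset.card_pos.2 ⟨c, h2⟩
  rw [wtOf] at h1
  omega

include hw in
lemma wt_one : ∀ m, 2 ≤ m → m ≤ k + 1 → wtOf T m = 1 := by
  intro m h2 hk
  have h1 : wtOf T ((m - 1) + 1) = ((a :: List.replicate k 1).getD (m - 1) 0) := hw (m - 1)
  rw [hookGetD, if_neg (by omega), if_pos (by omega)] at h1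
  have : (m - 1) + 1 = m := by omega
  rwa [this] at h1

include hw in
lemma val_uniq : ∀ m, 2 ≤ m → m ≤ k + 1 → ∀ c ∈ cellsOf l, ∀ d ∈ cellsOf l,
    T.entry c.1 c.2 = m → T.entry d.1 d.2 = m → c = d := by
  intro m h2 hk c hc d hd hce hde
  obtain ⟨x, hx⟩ := Finset.card_eq_one.1 (wt_one T hw m h2 hk)
  have hcx : c ∈ ({x} : Finset (ℕ × ℕ)) := hx ▸ Finset.mem_filter.2 ⟨hc, hce⟩
  have hdx : d ∈ ({x} : Finset (ℕ × ℕ)) := hx ▸ Finset.mem_filter.2 ⟨hd, hde⟩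
  rw [Finset.mem_singleton] at hcx hdx
  rw [hcx, hdx]

include hs hT hw in
lemma row_eq : ∀ m, 2 ≤ m → ∀ c ∈ cellsOf l, T.entry c.1 c.2 = m → c.1 + 1 = m := by
  intro m hm
  induction m, hm using Nat.le_induction with
  | base =>
    intro c hc hce
    have hub : c.1 + 1 ≤ 2 := hce ▸ entry_lower hs T c.1 c.2 (mem_cellsOf.1 hc)
    obtain ⟨d, hd, d', hd', hde, hde', hlt⟩ := hT 2 le_rfl ⟨c, hc, hce⟩
    have hk2 : 2 ≤ k + 1 := hce ▸ val_le T hw c hc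
    have hcd : c = d := val_uniq T hw 2 le_rfl hk2 c hc d hd hce hde
    rw [hcd] at hub ⊢
    omega
  | succ m hm ih =>
    intro c hc hce
    have hub : c.1 + 1 ≤ m + 1 := hce ▸ entry_lower hs T c.1 c.2 (mem_cellsOf.1 hc)
    obtain ⟨d, hd, d', hd', hde, hde', hlt⟩ := hT (m + 1) (by omega) ⟨c, hc, hce⟩
    have hde'' : T.entry d'.1 d'.2 = m := by simpa using hde'
    have hd'r : d'.1 + 1 = m := ih d' hd' hde''
    have hk2 : m + 1 ≤ k + 1 := hce ▸ val_le T hw c hc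
    have hcd : c = d := val_uniq T hw (m + 1) (by omega) hk2 c hc d hd hce hde
    rw [hcd] at hub ⊢
    omega

include hs hT hw in
lemma val_eq : ∀ c ∈ cellsOf l, T.entry c.1 c.2 = c.1 + 1 := by
  intro c hc
  have h1 : 1 ≤ T.entry c.1 c.2 := T.pos c.1 c.2 (mem_cellsOf.1 hc)
  have hub : c.1 + 1 ≤ T.entry c.1 c.2 := entry_lower hs T c.1 c.2 (mem_cellsOf.1 hc)
  by_cases h2 : 2 ≤ T.entry c.1 c.2
  · exact (row_eq hs T hT hw (T.entry c.1 c.2) h2 c hc rfl).symm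
  · omega

include hs hT hw in
lemma shape_eq : ∀ i, l.getD i 0 = ((a :: List.replicate k 1).getD i 0) := by
  intro i
  rw [← hw i, wtOf, ← card_row l i]
  congr 1
  apply Finset.filter_congr
  intro c hc
  rw [val_eq hs T hT hw c hc]
  omega

end Analysis

/-- The unique QYT of hook shape: row `i` is filled with the value `i + 1`. -/
def stairT (l : List ℕ) (hs : l.Pairwise (· ≥ ·)) : SSYT l where
  entry i j := if j < l.getD i 0 then i + 1 else 0
  pos i j h := by rw [if_pos h]; omega
  zeros i j h := by rw [if_neg h]
  rowWeak i j1 j2 h12 h2 := by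
    rw [if_pos (lt_of_le_of_lt h12 h2), if_pos h2]
  colStrict i1 i2 j h12 h2 := by
    rw [if_pos h2, if_pos (lt_of_lt_of_le h2 (getD_mono hs (le_of_lt h12)))]
    omega

lemma stairT_val {l : List ℕ} (hs : l.Pairwise (· ≥ ·)) :
    ∀ c ∈ cellsOf l, (stairT l hs).entry c.1 c.2 = c.1 + 1 := by
  intro c hc
  show (if c.2 < l.getD c.1 0 then c.1 + 1 else 0) = c.1 + 1
  rw [if_pos (mem_cellsOf.1 hc)]

lemma stairT_qyt {l : List ℕ} (hs : l.Pairwise (· ≥ ·)) : IsQYT (stairT l hs) := by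
  rintro m hm ⟨c, hc, hce⟩
  rw [stairT_val hs c hc] at hce
  have hc2 : c.2 < l.getD c.1 0 := mem_cellsOf.1 hc
  have hc1 : 1 ≤ c.1 := by omega
  have hmem : ((c.1 - 1, 0) : ℕ × ℕ) ∈ cellsOf l := by
    rw [mem_cellsOf]
    exact lt_of_lt_of_le (lt_of_le_of_lt (Nat.zero_le _) hc2) (getD_mono hs (by omega))
  refine ⟨c, hc, (c.1 - 1, 0), hmem, by rw [stairT_val hs c hc]; omega, ?_, by simp; omega⟩
  rw [stairT_val hs _ hmem]
  simp; omega

lemma stairT_wt {l : List ℕ} (hs : l.Pairwise (· ≥ ·)) (i : ℕ) :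
    wtOf (stairT l hs) (i + 1) = l.getD i 0 := by
  rw [wtOf, ← card_row l i]
  congr 1
  apply Finset.filter_congr
  intro c hc
  rw [stairT_val hs c hc]
  omega

lemma QK_hook_eval {n k : ℕ} (hnk : 1 ≤ n - k) (l : List ℕ) (hs : l.Pairwise (· ≥ ·))
    (hp : ∀ x ∈ l, 0 < x) :
    (l ≠ (n - k) :: List.replicate k 1 → QK l ((n - k) :: List.replicate k 1) = 0) ∧
    (l = (n - k) :: List.replicate k 1 → QK l ((n - k) :: List.replicate k 1) = 1) := by
  set α := (n - k) :: List.replicate k 1 with hα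
  have hαpos : ∀ x ∈ α, 0 < x := by
    intro x hx
    rw [hα] at hx
    rcases List.mem_cons.1 hx with h | h
    · omega
    · rw [List.eq_of_mem_replicate h]; omega
  have key : ∀ T : SSYT l, (IsQYT T ∧ ∀ i, wtOf T (i + 1) = α.getD i 0) → l = α := by
    rintro T ⟨hT, hw⟩
    exact eq_of_getD l α hp hαpos (shape_eq hs T hT hw)
  constructor
  · intro hne
    have hempty : {T : SSYT l | IsQYT T ∧ ∀ i, wtOf T (i + 1) = α.getD i 0} = ∅ := by
      rw [Set.eq_empty_iff_forall_notMem]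
      intro T hTm
      exact hne (key T hTm)
    rw [QK, hempty, Set.ncard_empty]
  · intro heq
    rw [QK]
    have hsing : {T : SSYT l | IsQYT T ∧ ∀ i, wtOf T (i + 1) = α.getD i 0} = {stairT l hs} := by
      apply Set.eq_singleton_iff_unique_mem.2
      constructor
      · refine ⟨stairT_qyt hs, fun i => ?_⟩
        rw [stairT_wt hs i, heq]
      · rintro T ⟨hT, hw⟩
        apply SSYT.ext'
        funext i j
        by_cases h : j < l.getD i 0
        · rw [val_eq hs T hT hw (i, j) (mem_cellsOf.2 h)]
          exact (stairT_val hs (i, j) (mem_cellsOf.2 h)).symm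
        · rw [T.zeros i j h, (stairT l hs).zeros i j h]
    rw [hsing, Set.ncard_singleton]

/-- Let n ≥ 1 and 0 ≤ k ≤ n−1, and let (n−k, 1^k) be the hook partition
of n.  For every partition μ of n, the entry of the inverse quasi-Kostka matrix in row μ
and column (n−k,1^k) is 0 unless μ = (n−k,1^k), in which case it is 1. -/
theorem inverse_quasiKostka_hook_column (n k : ℕ) (hn : 1 ≤ n) (hk : k ≤ n - 1)
    (Q Qinv : Matrix (PartitionList n) (PartitionList n) ℤ)
    (hQ : ∀ p q : PartitionList n, Q p q = QK p.1.blocks q.1.blocks)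
    (h1 : Q * Qinv = 1) (h2 : Qinv * Q = 1)
    (hook : PartitionList n)
    (hhook : hook.1.blocks = (n - k) :: List.replicate k 1) :
    ∀ μ : PartitionList n,
      (μ ≠ hook → Qinv μ hook = 0) ∧ (μ = hook → Qinv μ hook = 1) := by
  have hnk : 1 ≤ n - k := by omega
  have hQcol : ∀ q : PartitionList n, Q q hook = if q = hook then 1 else 0 := by
    intro q
    obtain ⟨h0, hone⟩ := QK_hook_eval (n := n) (k := k) hnk q.1.blocks q.2
      (fun x hx => q.1.blocks_pos hx)
    rw [hQ, hhook]
    by_cases hq : q = hook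
    · rw [hone (by rw [hq, hhook]), if_pos hq]
      norm_num
    · have hbl : q.1.blocks ≠ hook.1.blocks := fun hb => hq (Subtype.ext (by ext1; exact hb))
      rw [hhook] at hbl
      rw [h0 hbl, if_neg hq]
      norm_num
  intro μ
  have hmain : Qinv μ hook = (Qinv * Q) μ hook := by
    rw [Matrix.mul_apply, Finset.sum_congr rfl (fun x _ => by rw [hQcol x])]
    simp [mul_ite, mul_one, mul_zero, Finset.sum_ite_eq']
  constructor
  · intro h
    rw [hmain, h2, Matrix.one_apply_ne h]
  · intro h
    rw [hmain, h2, h, Matrix.one_apply_eq]
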